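/- Let a, d be complex numbers such that a is not an integer and d is not a nonpositive integer, and extend the Pochhammer symbol to negative integer indices by (a)_{-j} = 1/(a-j)_j. Then for all natural numbers m, n: (a)_{m-n}/((d)_m · m! · n!) = ((a)_m/((d)_m m!)) · ((-1)^n/((1-a)_n n!)) + ∑_{k=1}^{m} ∑_{l=1}^{min(k,n)} (-1)^{k+l} · ((k-1)!/((l-1)! l! (k-l)!)) · (1/((1-a)_l (d)_k)) · ((a+k)_{m-k}/((d+k)_{m-k} (m-k)!)) · ((-1)^{n-l}/((1-a+l)_{n-l} (n-l)!)). Equivalently, the double power series Η₅(a;d;x,y) = ∑_{m,n≥0} ((a)_{m-n}/((d)_m m! n!)) x^m y^n equals ₁F₁(a;d;x)·₀F₁(1-a;-y) + ∑_{k≥1}∑_{l=1}^{k} ((-1)^{k+l}(k-1)!/((l-1)! l! (k-l)! (1-a)_l (d)_k)) x^k y^l ₁F₁(a+k;d+k;x)·₀F₁(1-a+l;-y) as formal power series in x, y. -/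

import Mathlib

set_option maxHeartbeats 1000000

open Finset

/-- Pochhammer symbol (rising factorial): `(a)_k = a (a+1) ⋯ (a+k-1)`. -/
noncomputable def poch (a : ℂ) (k : ℕ) : ℂ := ∏ j ∈ Finset.range k, (a + j)

/-- Generalized Pochhammer symbol for integer index:
`(a)_z` is the usual rising factorial for `z ≥ 0`, and `(a)_{-j} = 1/(a-j)_j`. -/
noncomputable def pochZ (a : ℂ) : ℤ → ℂ
  | Int.ofNat k => poch a k
  | Int.negSucc j => 1 / poch (a - (j + 1 : ℕ)) (j + 1)

lemma poch_zero (a : ℂ) : poch a 0 = 1 := by simp [poch]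

lemma poch_succ (a : ℂ) (k : ℕ) : poch a (k + 1) = poch a k * (a + k) :=
  Finset.prod_range_succ _ _

lemma poch_add (a : ℂ) (j k : ℕ) : poch a (j + k) = poch a j * poch (a + j) k := by
  unfold poch
  rw [Finset.prod_range_add]
  congr 1
  exact Finset.prod_congr rfl fun i _ => by push_cast; ring

lemma poch_succ' (a : ℂ) (k : ℕ) : poch a (k + 1) = a * poch (a + 1) k := by
  have := poch_add a 1 k
  simpa [poch, add_comm 1 k] using this

lemma poch_ne_zero {a : ℂ} (h : ∀ i : ℕ, a + i ≠ 0) (k : ℕ) : poch a k ≠ 0 := by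
  unfold poch
  exact Finset.prod_ne_zero_iff.2 fun i _ => h i

lemma key (m : ℕ) : ∀ a ν : ℂ, poch (a - ν) m =
    ∑ k ∈ Finset.range (m + 1), (-1 : ℂ) ^ k * (m.choose k : ℂ) * poch ν k * poch (a + k) (m - k) := by
  induction m with
  | zero => intro a ν; simp [poch]
  | succ m ih =>
    intro a ν
    set g : ℕ → ℂ := fun k => (-1 : ℂ) ^ k * (m.choose k : ℂ) * poch ν k * poch (a + k) (m - k) with hg
    rw [Finset.sum_range_succ' _ (m+1)]
    have hterm : ∀ k ∈ Finset.range (m + 1),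
        (-1 : ℂ) ^ (k+1) * ((m+1).choose (k+1) : ℂ) * poch ν (k+1) * poch (a + ((k+1:ℕ):ℂ)) (m + 1 - (k+1))
        = (-((-1 : ℂ) ^ k * (m.choose k : ℂ) * (ν * poch (ν+1) k) * poch ((a+1) + k) (m - k)))
          + (a + m) * g (k+1) := by
      intro k hk
      simp only [Finset.mem_range] at hk
      have h1 : ((m+1).choose (k+1) : ℂ) = (m.choose k : ℂ) + (m.choose (k+1) : ℂ) := by
        rw [Nat.choose_succ_succ]; push_cast; ring
      have h2 : poch ν (k+1) = ν * poch (ν+1) k := poch_succ' ν k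
      have h3 : (a + ((k+1:ℕ):ℂ)) = (a+1) + (k:ℕ) := by push_cast; ring
      have h4 : m + 1 - (k+1) = m - k := by omega
      simp only [hg, h1, h2, h4, h3]
      rcases Nat.lt_or_ge k m with h | h
      · have h5 : poch ((a+1) + (k:ℕ)) (m - k) = poch ((a+1) + (k:ℕ)) (m - (k+1)) * (a + m) := by
          have he : m - k = (m - (k+1)) + 1 := by omega
          rw [he, poch_succ]
          congr 1
          have : ((m - (k+1) : ℕ) : ℂ) = (m : ℂ) - k - 1 := by
            push_cast [Nat.cast_sub (by omega : k + 1 ≤ m)]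
            ring
          rw [this]; ring
        rw [h5]
        ring
      · have hk' : k = m := by omega
        subst hk'
        simp [Nat.choose_succ_self, Nat.sub_self, poch_zero]
        ring
    rw [Finset.sum_congr rfl hterm, Finset.sum_add_distrib]
    have hA : ∑ k ∈ Finset.range (m+1),
        (-((-1 : ℂ) ^ k * (m.choose k : ℂ) * (ν * poch (ν+1) k) * poch ((a+1) + k) (m - k)))
        = -ν * poch (a - ν) m := by
      have h := ih (a+1) (ν+1)
      have e : (a+1) - (ν+1) = a - ν := by ring
      rw [e] at h
      rw [h, Finset.mul_sum]
      exact Finset.sum_congr rfl fun k _ => by ring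
    have hB : ∑ k ∈ Finset.range (m+1), (a + (m:ℕ)) * g (k+1)
        = (a + m) * (poch (a - ν) m - poch a m) := by
      rw [← Finset.mul_sum]
      congr 1
      have h1 : ∑ k ∈ Finset.range (m+1+1), g k
          = (∑ k ∈ Finset.range (m+1), g (k+1)) + g 0 := Finset.sum_range_succ' g (m+1)
      have h2 : ∑ k ∈ Finset.range (m+1+1), g k = ∑ k ∈ Finset.range (m+1), g k := by
        rw [Finset.sum_range_succ]
        simp [hg, Nat.choose_succ_self]
      have h3 : ∑ k ∈ Finset.range (m+1), g k = poch (a - ν) m := (ih a ν).symm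
      have h4 : g 0 = poch a m := by simp [hg, poch_zero]
      rw [h2, h3, h4] at h1
      linear_combination -h1
    rw [hA, hB]
    have hf0 : (-1 : ℂ) ^ 0 * ((m+1).choose 0 : ℂ) * poch ν 0 * poch (a + ((0:ℕ):ℂ)) (m + 1 - 0) = poch a m * (a + m) := by
      simp [poch_zero, poch_succ]
    rw [hf0, poch_succ (a - ν) m]
    ring

lemma vand (n k : ℕ) (hk : 1 ≤ k) :
    ∑ l ∈ Finset.Icc 1 (min k n), n.choose l * (k-1).choose (l-1) = (n + (k-1)).choose k := by
  rw [Nat.add_choose_eq, Finset.Nat.sum_antidiagonal_eq_sum_range_succ_mk]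
  apply Finset.sum_subset_zero_on_sdiff
  · intro l hl
    simp only [Finset.mem_Icc] at hl
    simp only [Finset.mem_range]
    omega
  · intro l hl
    simp only [Finset.mem_sdiff, Finset.mem_range, Finset.mem_Icc] at hl
    obtain ⟨h1, h2⟩ := hl
    rcases Nat.eq_zero_or_pos l with h | h
    · subst h
      have : (k-1).choose (k - 0) = 0 := Nat.choose_eq_zero_of_lt (by omega)
      simpa using this
    · have : n < l := by omega
      simp [Nat.choose_eq_zero_of_lt this]
  · intro l hl
    simp only [Finset.mem_Icc] at hl
    have h2 : l - 1 ≤ k - 1 := by omega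
    have h1 : (k - 1) - (l - 1) = k - l := by omega
    rw [← Nat.choose_symm h2, h1]

lemma poch_natCast (n k : ℕ) : poch (n : ℂ) k = (n.ascFactorial k : ℕ) := by
  induction k with
  | zero => simp [poch_zero]
  | succ k ih => rw [poch_succ, ih, Nat.ascFactorial_succ]; push_cast; ring

lemma poch_reflect (a : ℂ) (n : ℕ) : poch (a - n) n = (-1 : ℂ)^n * poch (1 - a) n := by
  unfold poch
  rw [← Finset.prod_range_reflect]
  have h : ∀ j ∈ Finset.range n, (a - n + ((n - 1 - j : ℕ) : ℂ)) = (-1) * (1 - a + j) := by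
    intro j hj
    simp only [Finset.mem_range] at hj
    push_cast [Nat.cast_sub (by omega : j ≤ n - 1), Nat.cast_sub (by omega : 1 ≤ n)]
    ring
  rw [Finset.prod_congr rfl h, Finset.prod_mul_distrib, Finset.prod_const, Finset.card_range]

lemma pochZ_eq (a : ℂ) (m n : ℕ) (h : ∀ i : ℕ, ∀ j : ℕ, a - j + i ≠ 0) :
    pochZ a ((m : ℤ) - n) * poch (a - n) n = poch (a - n) m := by
  rcases le_or_gt n m with hle | hlt
  · have h1 : (m : ℤ) - n = ((m - n : ℕ) : ℤ) := by omega
    rw [h1]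
    show poch a (m - n) * poch (a - n) n = poch (a - n) m
    have h2 : poch (a - n) (n + (m - n)) = poch (a - n) n * poch ((a - n) + n) (m - n) :=
      poch_add _ _ _
    rw [Nat.add_sub_cancel' hle] at h2
    have h3 : (a - (n:ℂ)) + (n:ℂ) = a := by ring
    rw [h3] at h2
    rw [h2]; ring
  · have h1 : (m : ℤ) - n = Int.negSucc (n - m - 1) := by
      rw [Int.negSucc_eq]; omega
    rw [h1]
    show (1 / poch (a - ((n - m - 1 + 1 : ℕ)) ) (n - m - 1 + 1)) * poch (a - n) n = poch (a - n) m
    have h4 : n - m - 1 + 1 = n - m := by omega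
    rw [h4]
    have h2 : poch (a - n) (m + (n - m)) = poch (a - n) m * poch ((a - n) + m) (n - m) :=
      poch_add _ _ _
    rw [Nat.add_sub_cancel' hlt.le] at h2
    have h3 : (a - (n:ℂ)) + (m:ℂ) = a - ((n - m : ℕ) : ℂ) := by
      push_cast [Nat.cast_sub hlt.le]; ring
    rw [h3] at h2
    have hnz : poch (a - ((n - m : ℕ) : ℂ)) (n - m) ≠ 0 :=
      poch_ne_zero (fun i => h i (n - m)) _
    field_simp [h2]
    rw [h2]; ring

/-- Decomposition formula (3.25) for `Η₅(a;d;x,y)`, coefficient of `x^m y^n`. -/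
theorem H5_decomposition (a d : ℂ) (ha : ∀ z : ℤ, a ≠ (z : ℂ))
    (hd : ∀ j : ℕ, d ≠ -(j : ℂ)) (m n : ℕ) :
    pochZ a ((m : ℤ) - n) / (poch d m * (m.factorial : ℂ) * (n.factorial : ℂ)) =
      poch a m / (poch d m * (m.factorial : ℂ)) *
          ((-1 : ℂ) ^ n / (poch (1 - a) n * (n.factorial : ℂ))) +
        ∑ k ∈ Finset.Icc 1 m, ∑ l ∈ Finset.Icc 1 (min k n),
          (-1 : ℂ) ^ (k + l) *
            (((k - 1).factorial : ℂ) /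
              (((l - 1).factorial : ℂ) * (l.factorial : ℂ) * ((k - l).factorial : ℂ))) *
            (1 / (poch (1 - a) l * poch d k)) *
            (poch (a + k) (m - k) / (poch (d + k) (m - k) * ((m - k).factorial : ℂ))) *
            ((-1 : ℂ) ^ (n - l) / (poch (1 - a + l) (n - l) * ((n - l).factorial : ℂ))) := by
  have h1a : ∀ j k : ℕ, poch (1 - a + j) k ≠ 0 := by
    intro j k
    refine poch_ne_zero (fun i hcon => ha ((j:ℤ) + i + 1) ?_) k
    push_cast
    linear_combination -hcon
  have h1a0 : ∀ k : ℕ, poch (1 - a) k ≠ 0 := by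
    intro k
    refine poch_ne_zero (fun i hcon => ha ((i:ℤ) + 1) ?_) k
    push_cast
    linear_combination -hcon
  have hsub : ∀ i j : ℕ, a - j + i ≠ 0 := by
    intro i j hcon
    exact ha ((j:ℤ) - i) (by push_cast; linear_combination hcon)
  have han : ∀ j k : ℕ, poch (a - j) k ≠ 0 := fun j k => poch_ne_zero (fun i => hsub i j) k
  have hdk0 : ∀ k : ℕ, poch d k ≠ 0 := by
    intro k
    exact poch_ne_zero (fun i hcon => hd i (by linear_combination hcon)) k
  have hdk : ∀ k j : ℕ, poch (d + k) j ≠ 0 := by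
    intro k j
    exact poch_ne_zero (fun i hcon => hd (k + i) (by push_cast; linear_combination hcon)) j
  have hfac : ∀ j : ℕ, (j.factorial : ℂ) ≠ 0 := fun j => Nat.cast_ne_zero.2 (Nat.factorial_ne_zero j)
  have hsq : ((-1:ℂ))^n * ((-1:ℂ))^n = 1 := by
    rw [← pow_add, ← two_mul, pow_mul]; norm_num
  set D : ℂ := poch d m * poch (1 - a) n * (m.factorial : ℂ) * (n.factorial : ℂ) with hD
  have hDne : D ≠ 0 := by
    apply mul_ne_zero (mul_ne_zero (mul_ne_zero (hdk0 m) (h1a0 n)) (hfac m)) (hfac n)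
  set G : ℕ → ℂ := fun k =>
    (-1 : ℂ) ^ (k + n) * (m.choose k : ℂ) * poch (n : ℂ) k * poch (a + k) (m - k) / D with hG
  have hsum : ∀ k ∈ Finset.Icc 1 m,
      (∑ l ∈ Finset.Icc 1 (min k n),
          (-1 : ℂ) ^ (k + l) *
            (((k - 1).factorial : ℂ) /
              (((l - 1).factorial : ℂ) * (l.factorial : ℂ) * ((k - l).factorial : ℂ))) *
            (1 / (poch (1 - a) l * poch d k)) *
            (poch (a + k) (m - k) / (poch (d + k) (m - k) * ((m - k).factorial : ℂ))) *
            ((-1 : ℂ) ^ (n - l) / (poch (1 - a + l) (n - l) * ((n - l).factorial : ℂ))))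
        = G k := by
    intro k hk
    simp only [Finset.mem_Icc] at hk
    obtain ⟨hk1, hk2⟩ := hk
    have hterm : ∀ l ∈ Finset.Icc 1 (min k n),
        (-1 : ℂ) ^ (k + l) *
            (((k - 1).factorial : ℂ) /
              (((l - 1).factorial : ℂ) * (l.factorial : ℂ) * ((k - l).factorial : ℂ))) *
            (1 / (poch (1 - a) l * poch d k)) *
            (poch (a + k) (m - k) / (poch (d + k) (m - k) * ((m - k).factorial : ℂ))) *
            ((-1 : ℂ) ^ (n - l) / (poch (1 - a + l) (n - l) * ((n - l).factorial : ℂ)))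
          = ((n.choose l * (k-1).choose (l-1) : ℕ) : ℂ) *
            ((-1 : ℂ) ^ (k + n) * (m.choose k : ℂ) * (k.factorial : ℂ) * poch (a + k) (m - k) / D) := by
      intro l hl
      simp only [Finset.mem_Icc] at hl
      obtain ⟨hl1, hl2'⟩ := hl
      have hlk : l ≤ k := le_trans hl2' (min_le_left _ _)
      have hln : l ≤ n := le_trans hl2' (min_le_right _ _)
      have hdsplit : poch d m = poch d k * poch (d + (k:ℕ)) (m - k) := by
        have := poch_add d k (m - k)
        rwa [Nat.add_sub_cancel' hk2] at this
      have hasplit : poch (1 - a) n = poch (1 - a) l * poch (1 - a + (l:ℕ)) (n - l) := by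
        have := poch_add (1 - a) l (n - l)
        rwa [Nat.add_sub_cancel' hln] at this
      have hmf : (m.factorial : ℂ) = (m.choose k : ℂ) * (k.factorial : ℂ) * ((m - k).factorial : ℂ) := by
        exact_mod_cast (Nat.choose_mul_factorial_mul_factorial hk2).symm
      have hnf : (n.factorial : ℂ) = (n.choose l : ℂ) * (l.factorial : ℂ) * ((n - l).factorial : ℂ) := by
        exact_mod_cast (Nat.choose_mul_factorial_mul_factorial hln).symm
      have hkf : ((k-1).factorial : ℂ)
          = ((k-1).choose (l-1) : ℂ) * ((l-1).factorial : ℂ) * ((k - l).factorial : ℂ) := by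
        have h := Nat.choose_mul_factorial_mul_factorial (show l - 1 ≤ k - 1 by omega)
        rw [show (k-1) - (l-1) = k - l by omega] at h
        exact_mod_cast h.symm
      have hsgn : (-1:ℂ)^(k+n) = (-1:ℂ)^(k+l) * (-1:ℂ)^(n-l) := by
        rw [← pow_add, show k+l+(n-l) = k+n by omega]
      have A1 : ((l-1).factorial : ℂ) ≠ 0 := hfac _
      have A2 : ((k-l).factorial : ℂ) ≠ 0 := hfac _
      have A3 : (l.factorial : ℂ) ≠ 0 := hfac _
      have A4 : ((m-k).factorial : ℂ) ≠ 0 := hfac _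
      have A5 : ((n-l).factorial : ℂ) ≠ 0 := hfac _
      have A6 : (k.factorial : ℂ) ≠ 0 := hfac _
      have A7 : poch (1 - a) l ≠ 0 := h1a0 l
      have A8 : poch d k ≠ 0 := hdk0 k
      have A9 : poch (d + (k:ℕ)) (m - k) ≠ 0 := hdk k (m - k)
      have A10 : poch (1 - a + (l:ℕ)) (n - l) ≠ 0 := h1a l (n - l)
      have A11 : (m.choose k : ℂ) ≠ 0 := Nat.cast_ne_zero.2 (Nat.choose_pos hk2).ne'
      have A12 : (n.choose l : ℂ) ≠ 0 := Nat.cast_ne_zero.2 (Nat.choose_pos hln).ne'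
      rw [hD, hdsplit, hasplit, hmf, hnf, hkf, hsgn]
      push_cast
      have hLne : (((l-1).factorial : ℂ) * (l.factorial : ℂ) * ((k-l).factorial : ℂ) * poch (1 - a) l * poch d k * poch (d + (k:ℕ)) (m - k) * ((m-k).factorial : ℂ) * poch (1 - a + (l:ℕ)) (n - l) * ((n-l).factorial : ℂ)) ≠ 0 := by
        exact mul_ne_zero (mul_ne_zero (mul_ne_zero (mul_ne_zero (mul_ne_zero (mul_ne_zero
          (mul_ne_zero (mul_ne_zero A1 A3) A2) A7) A8) A9) A4) A10) A5
      have hRne : (poch d k * poch (d + (k:ℕ)) (m - k) * (poch (1 - a) l * poch (1 - a + (l:ℕ)) (n - l)) * ((m.choose k : ℂ) * (k.factorial : ℂ) * ((m-k).factorial : ℂ)) * ((n.choose l : ℂ) * (l.factorial : ℂ) * ((n-l).factorial : ℂ))) ≠ 0 := by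
        exact mul_ne_zero (mul_ne_zero (mul_ne_zero (mul_ne_zero A8 A9)
          (mul_ne_zero A7 A10)) (mul_ne_zero (mul_ne_zero A11 A6) A4))
          (mul_ne_zero (mul_ne_zero A12 A3) A5)
      refine Eq.trans (b := ((-1:ℂ)^k * (-1:ℂ)^l * (-1:ℂ)^(n-l) * (((k-1).choose (l-1) : ℂ) * ((l-1).factorial : ℂ) * ((k-l).factorial : ℂ)) * poch (a + (k:ℕ)) (m - k)) / (((l-1).factorial : ℂ) * (l.factorial : ℂ) * ((k-l).factorial : ℂ) * poch (1 - a) l * poch d k * poch (d + (k:ℕ)) (m - k) * ((m-k).factorial : ℂ) * poch (1 - a + (l:ℕ)) (n - l) * ((n-l).factorial : ℂ))) (by rw [pow_add]; ring) ?_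
      refine Eq.trans (b := ((n.choose l : ℂ) * ((k-1).choose (l-1) : ℂ) * ((-1:ℂ)^k * (-1:ℂ)^l * (-1:ℂ)^(n-l) * (m.choose k : ℂ) * (k.factorial : ℂ) * poch (a + (k:ℕ)) (m - k))) / (poch d k * poch (d + (k:ℕ)) (m - k) * (poch (1 - a) l * poch (1 - a + (l:ℕ)) (n - l)) * ((m.choose k : ℂ) * (k.factorial : ℂ) * ((m-k).factorial : ℂ)) * ((n.choose l : ℂ) * (l.factorial : ℂ) * ((n-l).factorial : ℂ)))) ?_ (by rw [pow_add]; ring)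
      rw [div_eq_div_iff hLne hRne]
      ring
    rw [Finset.sum_congr rfl hterm]
    have hpull : ∑ l ∈ Finset.Icc 1 (min k n),
        ((n.choose l * (k-1).choose (l-1) : ℕ) : ℂ) *
          ((-1 : ℂ) ^ (k + n) * (m.choose k : ℂ) * (k.factorial : ℂ) * poch (a + k) (m - k) / D)
        = (((n + (k-1)).choose k : ℕ) : ℂ) *
          ((-1 : ℂ) ^ (k + n) * (m.choose k : ℂ) * (k.factorial : ℂ) * poch (a + k) (m - k) / D) := by
      rw [← Finset.sum_mul, ← Nat.cast_sum, vand n k hk1]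
    rw [hpull]
    have hpn : poch ((n:ℕ) : ℂ) k = (k.factorial : ℂ) * (((n + (k-1)).choose k : ℕ) : ℂ) := by
      rw [poch_natCast, Nat.ascFactorial_eq_factorial_mul_choose']
      rw [show n + k - 1 = n + (k - 1) by omega]
      push_cast
      ring
    simp only [hG, hpn]
    ring
  rw [Finset.sum_congr rfl hsum]
  have hfirst : poch a m / (poch d m * (m.factorial : ℂ)) *
      ((-1 : ℂ) ^ n / (poch (1 - a) n * (n.factorial : ℂ))) = G 0 := by
    have A1 : poch d m ≠ 0 := hdk0 m
    have A2 : poch (1 - a) n ≠ 0 := h1a0 n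
    have A3 : (m.factorial : ℂ) ≠ 0 := hfac m
    have A4 : (n.factorial : ℂ) ≠ 0 := hfac n
    simp only [hG, Nat.cast_zero, add_zero, Nat.choose_zero_right, Nat.cast_one, pow_zero,
      Nat.sub_zero, poch_zero, zero_add]
    rw [hD]
    field_simp
  rw [hfirst]
  have hIcc : Finset.range (m+1) = insert 0 (Finset.Icc 1 m) := by
    ext x
    simp only [Finset.mem_range, Finset.mem_insert, Finset.mem_Icc]
    omega
  have hcombine : G 0 + ∑ k ∈ Finset.Icc 1 m, G k = ∑ k ∈ Finset.range (m+1), G k := by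
    rw [hIcc, Finset.sum_insert (by simp)]
  rw [hcombine]
  have hRHS : ∑ k ∈ Finset.range (m+1), G k = poch (a - (n:ℂ)) m * ((-1:ℂ)^n / D) := by
    rw [key m a (n:ℂ), Finset.sum_mul]
    apply Finset.sum_congr rfl
    intro k _
    simp only [hG, pow_add]
    ring
  rw [hRHS]
  have hz : pochZ a ((m:ℤ) - n) = poch (a - n) m / poch (a - n) n := by
    rw [eq_div_iff (han n n)]
    exact pochZ_eq a m n hsub
  rw [hz, hD, poch_reflect, div_div, mul_div_assoc']
  rw [div_eq_div_iff (by
      exact mul_ne_zero (mul_ne_zero (pow_ne_zero n (by norm_num)) (h1a0 n))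
        (mul_ne_zero (mul_ne_zero (hdk0 m) (hfac m)) (hfac n)))
    (mul_ne_zero (mul_ne_zero (mul_ne_zero (hdk0 m) (h1a0 n)) (hfac m)) (hfac n))]
  linear_combination (-(poch (a - (n:ℂ)) m * poch (1 - a) n * poch d m *
    (m.factorial : ℂ) * (n.factorial : ℂ))) * hsq
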